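/- Relaxed waterfilling optimum: for integers n ≥ 3, 1 ≤ K ≤ n-2, consider the problem of minimizing max_{1≤k≤K} (a_k - 1)(n-k-1) over real vectors a ∈ ℝ_{>0}^K with Σ a_k = n. The minimum value equals c := (n-K)/S(n,K) where S(n,K) = Σ_{k=1}^K 1/(n-k-1), achieved by a_k = 1 + c/(n-k-1). -/

import Mathlib

open Finset

/-- The relaxed (real) waterfilling problem: minimise
`max_{1≤k≤K} (a_k - 1)(n-k-1)` over real vectors `a ∈ ℝ_{>0}^K` with `Σ a_k = n`.
The minimum is `c = (n-K)/S(n,K)` with `S(n,K) = Σ_{k=1}^K 1/(n-k-1)`,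
achieved by `a_k = 1 + c/(n-k-1)`. -/
theorem stmt_7 (n K : ℕ) (hn : 3 ≤ n) (hK1 : 1 ≤ K) (hK2 : K ≤ n - 2)
    (S c : ℝ)
    (hS : S = ∑ k ∈ Finset.Icc 1 K, 1 / ((n : ℝ) - (k : ℝ) - 1))
    (hc : c = ((n : ℝ) - (K : ℝ)) / S)
    (astar : Fin K → ℝ)
    (hastar : ∀ i : Fin K, astar i = 1 + c / ((n : ℝ) - (i : ℕ) - 2)) :
    IsLeast {v : ℝ | ∃ a : Fin K → ℝ, (∀ i, 0 < a i) ∧ (∑ i, a i) = (n : ℝ) ∧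
        v = ⨆ i : Fin K, (a i - 1) * ((n : ℝ) - (i : ℕ) - 2)} c
    ∧ (∀ i, 0 < astar i) ∧ (∑ i, astar i) = (n : ℝ)
    ∧ (⨆ i : Fin K, (astar i - 1) * ((n : ℝ) - (i : ℕ) - 2)) = c := by
  haveI : NeZero K := ⟨by omega⟩
  have hKn : (K : ℝ) + 2 ≤ (n : ℝ) := by exact_mod_cast (by omega : K + 2 ≤ n)
  have hw0 : ∀ i : Fin K, (0 : ℝ) < (n : ℝ) - (i : ℕ) - 2 := by
    intro i
    have hi : (i : ℕ) + 3 ≤ n := by have := i.2; omega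
    have : ((i : ℕ) : ℝ) + 3 ≤ (n : ℝ) := by exact_mod_cast hi
    linarith
  have hSsum : S = ∑ i : Fin K, 1 / ((n : ℝ) - (i : ℕ) - 2) := by
    rw [hS, show Finset.Icc 1 K = Finset.Ico 1 (K + 1) from by rw [Finset.Ico_add_one_right_eq_Icc],
      Finset.sum_Ico_eq_sum_range,
      Fin.sum_univ_eq_sum_range (fun m => 1 / ((n : ℝ) - (m : ℕ) - 2))]
    have hK : K + 1 - 1 = K := by omega
    rw [hK]
    refine Finset.sum_congr rfl fun k _ => ?_
    push_cast
    ring_nf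
  have hS0 : 0 < S := by
    rw [hSsum]
    exact Finset.sum_pos (fun i _ => div_pos one_pos (hw0 i)) Finset.univ_nonempty
  have hc0 : 0 < c := by
    rw [hc]; exact div_pos (by linarith) hS0
  have hcS : c * S = (n : ℝ) - K := by
    rw [hc, div_mul_cancel₀ _ hS0.ne']
  have hval : ∀ i : Fin K, (astar i - 1) * ((n : ℝ) - (i : ℕ) - 2) = c := by
    intro i
    rw [hastar i]
    field_simp
    rw [add_sub_cancel_left, mul_div_cancel₀ _ (hw0 i).ne']
  have hpos : ∀ i, 0 < astar i := by
    intro i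
    rw [hastar i]
    have := div_pos hc0 (hw0 i)
    linarith
  have hsum : (∑ i, astar i) = (n : ℝ) := by
    have : (∑ i, astar i) = ∑ i : Fin K, (1 + c * (1 / ((n : ℝ) - (i : ℕ) - 2))) := by
      refine Finset.sum_congr rfl fun i _ => ?_
      rw [hastar i]; ring
    rw [this, Finset.sum_add_distrib, Finset.sum_const, ← Finset.mul_sum, ← hSsum,
      Finset.card_univ, Fintype.card_fin, hcS]
    push_cast
    ring
  have hsup : (⨆ i : Fin K, (astar i - 1) * ((n : ℝ) - (i : ℕ) - 2)) = c := by
    have : (fun i : Fin K => (astar i - 1) * ((n : ℝ) - (i : ℕ) - 2)) = fun _ => c :=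
      funext hval
    rw [this, ciSup_const]
  refine ⟨⟨⟨astar, hpos, hsum, hsup.symm⟩, ?_⟩, hpos, hsum, hsup⟩
  rintro v ⟨a, hap, has, rfl⟩
  have hb : BddAbove (Set.range fun i : Fin K => (a i - 1) * ((n : ℝ) - (i : ℕ) - 2)) :=
    Set.Finite.bddAbove (Set.finite_range _)
  set v := ⨆ i : Fin K, (a i - 1) * ((n : ℝ) - (i : ℕ) - 2) with hv
  have hle : ∀ i : Fin K, (a i - 1) * ((n : ℝ) - (i : ℕ) - 2) ≤ v := fun i => le_ciSup hb i
  have ha : ∀ i : Fin K, a i ≤ 1 + v * (1 / ((n : ℝ) - (i : ℕ) - 2)) := by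
    intro i
    have h1 : a i - 1 ≤ v / ((n : ℝ) - (i : ℕ) - 2) :=
      (le_div_iff₀ (hw0 i)).mpr (hle i)
    have h2 : v / ((n : ℝ) - (i : ℕ) - 2) = v * (1 / ((n : ℝ) - (i : ℕ) - 2)) := by ring
    linarith [h1, h2 ▸ h1]
  have hsumle : (n : ℝ) ≤ K + v * S := by
    calc (n : ℝ) = ∑ i, a i := has.symm
      _ ≤ ∑ i : Fin K, (1 + v * (1 / ((n : ℝ) - (i : ℕ) - 2))) :=
          Finset.sum_le_sum fun i _ => ha i
      _ = K + v * S := by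
          rw [Finset.sum_add_distrib, Finset.sum_const, ← Finset.mul_sum, ← hSsum,
            Finset.card_univ, Fintype.card_fin]
          push_cast
          ring
  rw [hc]
  rw [div_le_iff₀ hS0]
  linarith
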